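/- Let λ > 0, W > 0 and ℓ ≥ 0. Let t_t and t_a be independent real random variables, where t_t has the shifted exponential distribution SExp(ℓ, λ) and t_a is uniformly distributed on the interval [0, W]. If W ≥ ℓ, then P(t_t ≥ t_a) = 1/(λW) + ℓ/W − e^{−λ(W−ℓ)}/(λW). If W < ℓ, then P(t_t ≥ t_a) = 1. -/

import Mathlib

open MeasureTheory ProbabilityTheory

/-- The shifted exponential distribution `SExp(Δ, λ)`:
    density `λ e^{-λ(x-Δ)}` for `x ≥ Δ` and `0` otherwise. -/
noncomputable def sexp (Δ lam : ℝ) : Measure ℝ :=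
  volume.withDensity fun x =>
    ENNReal.ofReal (if Δ ≤ x then lam * Real.exp (-lam * (x - Δ)) else 0)

/-- The uniform distribution on `[0, W]`. -/
noncomputable def unif (W : ℝ) : Measure ℝ :=
  (ENNReal.ofReal W)⁻¹ • volume.restrict (Set.Icc 0 W)

theorem stmt7 {Ω : Type*} [MeasurableSpace Ω] (P : Measure Ω) [IsProbabilityMeasure P]
    (lam W ℓ : ℝ) (hlam : 0 < lam) (hW : 0 < W) (hℓ : 0 ≤ ℓ)
    (t a : Ω → ℝ) (htmeas : Measurable t) (hameas : Measurable a)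
    (ht : Measure.map t P = sexp ℓ lam)
    (ha : Measure.map a P = unif W)
    (hindep : IndepFun t a P) :
    (ℓ ≤ W → P {ω | a ω ≤ t ω}
        = ENNReal.ofReal (1 / (lam * W) + ℓ / W - Real.exp (-lam * (W - ℓ)) / (lam * W)))
    ∧ (W < ℓ → P {ω | a ω ≤ t ω} = 1) := by
  have hsprob : IsProbabilityMeasure (sexp ℓ lam) :=
    ht ▸ Measure.isProbabilityMeasure_map htmeas.aemeasurable
  have huprob : IsProbabilityMeasure (unif W) :=
    ha ▸ Measure.isProbabilityMeasure_map hameas.aemeasurable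
  -- the density of sexp
  set dens : ℝ → ℝ := fun x => if ℓ ≤ x then lam * Real.exp (-lam * (x - ℓ)) else 0 with hdens
  have hdensmeas : Measurable fun x => ENNReal.ofReal (dens x) := by
    apply Measurable.ennreal_ofReal
    apply Measurable.ite measurableSet_Ici _ measurable_const
    fun_prop
  -- step 1 : reduce to a product-measure computation
  have key1 : P {ω | a ω ≤ t ω} = ∫⁻ x, unif W (Set.Iic x) ∂(sexp ℓ lam) := by
    have hmap : Measure.map (fun ω => (t ω, a ω)) P = (sexp ℓ lam).prod (unif W) := by
      rw [← ht, ← ha]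
      exact (indepFun_iff_map_prod_eq_prod_map_map htmeas.aemeasurable
        hameas.aemeasurable).mp hindep
    have hset : MeasurableSet {p : ℝ × ℝ | p.2 ≤ p.1} :=
      measurableSet_le measurable_snd measurable_fst
    have h1 : P {ω | a ω ≤ t ω}
        = Measure.map (fun ω => (t ω, a ω)) P {p : ℝ × ℝ | p.2 ≤ p.1} := by
      rw [Measure.map_apply (htmeas.prodMk hameas) hset]
      rfl
    rw [h1, hmap, Measure.prod_apply hset]
    congr 1
  -- step 2 : evaluate unif W (Iic x)
  have hunif : ∀ x : ℝ, unif W (Set.Iic x)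
      = (ENNReal.ofReal W)⁻¹ * ENNReal.ofReal (min W x) := by
    intro x
    have h2 : Set.Iic x ∩ Set.Icc 0 W = Set.Icc (0:ℝ) (min W x) := by
      ext y; simp [le_min_iff]; tauto
    rw [unif, Measure.smul_apply, Measure.restrict_apply measurableSet_Iic,
      h2, Real.volume_Icc, smul_eq_mul, sub_zero]
  -- step 3 : unfold the withDensity
  set F : ℝ → ENNReal :=
    fun x => (ENNReal.ofReal W)⁻¹ * ENNReal.ofReal (min W x) * ENNReal.ofReal (dens x) with hF
  have key2 : P {ω | a ω ≤ t ω} = ∫⁻ x, F x := by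
    rw [key1]
    have hfmeas : Measurable fun x => (ENNReal.ofReal W)⁻¹ * ENNReal.ofReal (min W x) := by
      apply Measurable.const_mul
      exact (measurable_const.min measurable_id).ennreal_ofReal
    rw [sexp, lintegral_withDensity_eq_lintegral_mul _ hdensmeas (by
      simpa only [hunif] using hfmeas)]
    apply lintegral_congr fun x => ?_
    simp only [Pi.mul_apply, hunif x, hF]
    ring
  have hWtop : ENNReal.ofReal W ≠ ⊤ := ENNReal.ofReal_ne_top
  have hWzero : ENNReal.ofReal W ≠ 0 := by simp [hW]
  -- total mass of the density
  have hcex : ∀ x : ℝ, 0 ≤ dens x := by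
    intro x; rw [hdens]; dsimp only
    split
    · positivity
    · exact le_rfl
  -- total mass of sexp is 1
  have hmass : ∫⁻ x, ENNReal.ofReal (dens x) = 1 := by
    have h1 : (sexp ℓ lam) Set.univ = 1 := measure_univ
    rwa [sexp, withDensity_apply _ MeasurableSet.univ, Measure.restrict_univ] at h1
  constructor
  · -- case ℓ ≤ W
    intro hlW
    have hWne : W ≠ 0 := hW.ne'
    have hlamne : lam ≠ 0 := hlam.ne'
    set c := Real.exp (-lam * (W - ℓ)) with hc
    set g : ℝ → ℝ := fun x => W⁻¹ * x * (lam * Real.exp (-lam * (x - ℓ))) with hg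
    have hgnn : ∀ x ∈ Set.Icc ℓ W, 0 ≤ g x := fun x hx =>
      mul_nonneg (mul_nonneg (inv_nonneg.2 hW.le) (hℓ.trans hx.1)) (by positivity)
    -- the real integral over [ℓ, W]
    have hgint : IntegrableOn g (Set.Icc ℓ W) := (by fun_prop : Continuous g).integrableOn_Icc
    have hgval : ∫ x in Set.Icc ℓ W, g x
        = (ℓ * W⁻¹ + (lam * W)⁻¹) - (W * W⁻¹ + (lam * W)⁻¹) * c := by
      rw [MeasureTheory.integral_Icc_eq_integral_Ioc, ← intervalIntegral.integral_of_le hlW]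
      have h := intervalIntegral.integral_eq_sub_of_hasDerivAt
        (f := fun x => -((x * W⁻¹ + (lam * W)⁻¹) * Real.exp (-lam * (x - ℓ))))
        (f' := g) (a := ℓ) (b := W)
        (fun x _ => by
          have h1 : HasDerivAt (fun x : ℝ => x * W⁻¹ + (lam * W)⁻¹) W⁻¹ x := by
            simpa using ((hasDerivAt_id x).mul_const W⁻¹).add_const (lam * W)⁻¹
          have h2 : HasDerivAt (fun x : ℝ => Real.exp (-lam * (x - ℓ)))
              (-lam * Real.exp (-lam * (x - ℓ))) x := by
            have h3 : HasDerivAt (fun x : ℝ => -lam * (x - ℓ)) (-lam) x := by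
              simpa using ((hasDerivAt_id x).sub_const ℓ).const_mul (-lam)
            simpa [mul_comm] using h3.exp
          have h4 := (h1.mul h2).neg
          convert h4 using 1
          · rfl
          rw [hg]
          field_simp
          ring)
        (by apply Continuous.intervalIntegrable; fun_prop)
      rw [h, hc]
      simp only [Real.exp_zero, sub_self, mul_zero]
      ring
    -- lintegral of F over [ℓ, W]
    have hIcc : ∫⁻ x in Set.Icc ℓ W, F x = ENNReal.ofReal (∫ x in Set.Icc ℓ W, g x) := by
      have hEq : ∀ x ∈ Set.Icc ℓ W, F x = ENNReal.ofReal (g x) := by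
        intro x hx
        rw [hF, hg]; dsimp only
        rw [hdens]; dsimp only
        rw [if_pos hx.1, min_eq_right hx.2, ← ENNReal.ofReal_inv_of_pos hW,
          ← ENNReal.ofReal_mul (inv_nonneg.2 hW.le),
          ← ENNReal.ofReal_mul (mul_nonneg (inv_nonneg.2 hW.le) (hℓ.trans hx.1))]
      rw [setLIntegral_congr_fun measurableSet_Icc hEq,
        ← ofReal_integral_eq_lintegral_ofReal hgint
          ((ae_restrict_iff' measurableSet_Icc).2 (ae_of_all _ hgnn))]
    -- lintegral of F over (W, ∞)
    have hderiv : ∀ x ∈ Set.Ici W, HasDerivAt (fun x => -Real.exp (-lam * (x - ℓ)))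
        (lam * Real.exp (-lam * (x - ℓ))) x := by
      intro x _
      have h3 : HasDerivAt (fun x : ℝ => -lam * (x - ℓ)) (-lam) x := by
        simpa using ((hasDerivAt_id x).sub_const ℓ).const_mul (-lam)
      have h4 := h3.exp.neg
      convert h4 using 1
      · rfl
      · rfl
      · rfl
      ring
    have hpos : ∀ x ∈ Set.Ioi W, 0 ≤ lam * Real.exp (-lam * (x - ℓ)) :=
      fun x _ => by positivity
    have htend : Filter.Tendsto (fun x => -Real.exp (-lam * (x - ℓ)))
        Filter.atTop (nhds 0) := by
      rw [← neg_zero]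
      apply Filter.Tendsto.neg
      apply Real.tendsto_exp_atBot.comp
      apply (Filter.tendsto_const_mul_atBot_of_neg (by linarith)).mpr
      simpa [sub_eq_add_neg] using Filter.tendsto_atTop_add_const_right _ (-ℓ) Filter.tendsto_id
    have hIoival : ∫ x in Set.Ioi W, lam * Real.exp (-lam * (x - ℓ)) = c := by
      rw [MeasureTheory.integral_Ioi_of_hasDerivAt_of_nonneg' hderiv hpos htend, hc]
      simp
    have hIoi : ∫⁻ x in Set.Ioi W, F x = ENNReal.ofReal c := by
      have hEq : ∀ x ∈ Set.Ioi W, F x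
          = ENNReal.ofReal (lam * Real.exp (-lam * (x - ℓ))) := by
        intro x hx
        rw [hF]; dsimp only
        rw [hdens]; dsimp only
        rw [if_pos (hlW.trans (le_of_lt hx)), min_eq_left (le_of_lt hx),
          ENNReal.inv_mul_cancel hWzero hWtop, one_mul]
      rw [setLIntegral_congr_fun measurableSet_Ioi hEq,
        ← ofReal_integral_eq_lintegral_ofReal
          (MeasureTheory.integrableOn_Ioi_deriv_of_nonneg' hderiv hpos htend)
          ((ae_restrict_iff' measurableSet_Ioi).2 (ae_of_all _ hpos)), hIoival]
    -- assemble
    have hdisj : Disjoint (Set.Icc ℓ W) (Set.Ioi W) := by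
      rw [Set.disjoint_left]
      intro x hx hx2
      exact absurd hx.2 (not_le.2 hx2)
    have hcompl : ∫⁻ x in (Set.Ici ℓ)ᶜ, F x = 0 := by
      rw [Set.compl_Ici]
      have hEq : ∀ x ∈ Set.Iio ℓ, F x = 0 := by
        intro x hx
        rw [hF]; dsimp only
        rw [hdens]; dsimp only
        rw [if_neg (not_le.2 hx), ENNReal.ofReal_zero, mul_zero]
      rw [setLIntegral_congr_fun measurableSet_Iio hEq, lintegral_zero]
    have hAnn : 0 ≤ ∫ x in Set.Icc ℓ W, g x :=
      setIntegral_nonneg measurableSet_Icc hgnn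
    rw [key2, ← lintegral_add_compl F measurableSet_Ici (μ := volume),
      hcompl, add_zero, ← Set.Icc_union_Ioi_eq_Ici hlW,
      lintegral_union measurableSet_Ioi hdisj, hIcc, hIoi,
      ← ENNReal.ofReal_add hAnn (Real.exp_nonneg _), hgval]
    congr 1
    simp only [hc]
    field_simp
    ring
  · -- case W < ℓ
    intro hWl
    rw [key2, ← hmass]
    apply lintegral_congr fun x => ?_
    rw [hF]
    dsimp only
    by_cases hx : ℓ ≤ x
    · have hWx : W ≤ x := (hWl.trans_le hx).le
      rw [min_eq_left hWx, ENNReal.inv_mul_cancel hWzero hWtop, one_mul]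
    · rw [hdens]
      simp only [hx, if_false, ENNReal.ofReal_zero, mul_zero]
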